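/- Let M:(ℝ,≤)²→vect_F be a pointwise finite-dimensional persistence module admitting a finite convex isotopy subdivision of (ℝ,≤)² subordinate to M, with poset of chambers (P,≤) and chamber map F_M:(ℝ,≤)²→(P,≤). Define Ñ:(P,≤)→vect_F by Ñ_p = lim_{J_p}M for p ∈ P, Ñ(p≤p) = id, and Ñ(p≤q) = φ_{J_pJ_q} for p < q, where φ_{J_pJ_q} is the canonical map between limits induced by M. Then M ≅ Ñ ∘ F_M; in particular, the finite convex isotopy subdivision yields a finite encoding of M by the finite poset (P,≤). -/

import Mathlib

/-- A persistence module over a preorder `P` with coefficients in a field `F`: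
a functor `(P,≤) → Vect_F`, given by vector spaces `V p` and linear maps
`map : i ≤ j → (V i →ₗ[F] V j)` satisfying the functoriality equations. -/
structure PersistenceModule (F : Type) [Field F] (P : Type) [Preorder P] where
  V : P → Type
  [addCommGroup : ∀ p, AddCommGroup (V p)]
  [module : ∀ p, Module F (V p)]
  map : ∀ {i j : P}, i ≤ j → (V i →ₗ[F] V j)
  map_id : ∀ i : P, map (le_refl i) = LinearMap.id
  map_comp : ∀ {i j k : P} (hij : i ≤ j) (hjk : j ≤ k),
    (map hjk).comp (map hij) = map (hij.trans hjk)

attribute [instance] PersistenceModule.addCommGroup PersistenceModule.module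

/-- A zigzag path `a - x₁ - ⋯ - xₙ - b` in a preorder, where each consecutive
pair of points is comparable. -/
inductive Zigzag (P : Type) [Preorder P] : P → P → Type
  | single (a : P) : Zigzag P a a
  | consLe {a b c : P} (h : a ≤ b) (p : Zigzag P b c) : Zigzag P a c
  | consGe {a b c : P} (h : b ≤ a) (p : Zigzag P b c) : Zigzag P a c

/-- Convexity of a subset of a poset: `i ≤ j ≤ k` with `i, k ∈ J` implies `j ∈ J`. -/
def PosetConvex {P : Type} [Preorder P] (J : Set P) : Prop :=
  ∀ i ∈ J, ∀ k ∈ J, ∀ j : P, i ≤ j → j ≤ k → j ∈ J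

/-- Connectedness: any two points of `J` are joined by a finite zigzag path inside `J`. -/
def ZigzagConnected {P : Type} [Preorder P] (J : Set P) : Prop :=
  ∀ a b : J, Nonempty (Zigzag (↥J) a b)

/-- Restriction of a persistence module to a subset of the parameter poset. -/
def PersistenceModule.restrict {F : Type} [Field F] {P : Type} [Preorder P]
    (M : PersistenceModule F P) (J : Set P) : PersistenceModule F ↥J where
  V i := M.V ↑i
  map {i j} h := M.map (show (i : P) ≤ (j : P) from h)
  map_id i := M.map_id ↑i
  map_comp _ _ := M.map_comp _ _

/-- `L` together with the legs `σ` is a limit cone over the persistence module `M`. -/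
def IsLimitCone {F : Type} [Field F] {P : Type} [Preorder P] (M : PersistenceModule F P)
    (L : Type) [AddCommGroup L] [Module F L] (σ : ∀ i : P, L →ₗ[F] M.V i) : Prop :=
  (∀ (i j : P) (h : i ≤ j), (M.map h).comp (σ i) = σ j) ∧
  ∀ (N : Type) [AddCommGroup N] [Module F N] (τ : ∀ i : P, N →ₗ[F] M.V i),
    (∀ (i j : P) (h : i ≤ j), (M.map h).comp (τ i) = τ j) →
    ∃! φ : N →ₗ[F] L, ∀ i : P, (σ i).comp φ = τ i

/-- The relation `p → q` between chambers of a subdivision `j ↦ C j`: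
`p → q` iff `p = q`, or `p ≠ q` and there are `x ∈ J_p`, `y ∈ J_q` with `x ≤ y`. -/
def chamberRel (C : ℝ × ℝ → Set (ℝ × ℝ)) : Set (ℝ × ℝ) → Set (ℝ × ℝ) → Prop :=
  fun A B => A ∈ Set.range C ∧ B ∈ Set.range C ∧
    (A = B ∨ (A ≠ B ∧ ∃ x ∈ A, ∃ y ∈ B, x ≤ y))

/-- The set of chambers of the subdivision `j ↦ C j`. -/
def ChamberPoset (C : ℝ × ℝ → Set (ℝ × ℝ)) : Type :=
  {A : Set (ℝ × ℝ) // A ∈ Set.range C}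

/-- The chambers carry the preorder generated (as reflexive-transitive closure)
by `chamberRel`. -/
instance (C : ℝ × ℝ → Set (ℝ × ℝ)) : Preorder (ChamberPoset C) where
  le A B := Relation.ReflTransGen (chamberRel C) A.1 B.1
  le_refl A := Relation.ReflTransGen.refl
  le_trans A B D hAB hBD := Relation.ReflTransGen.trans hAB hBD

/-- The map `F_M` sending a point of the plane to its chamber. -/
def chamberMap (C : ℝ × ℝ → Set (ℝ × ℝ)) : ℝ × ℝ → ChamberPoset C :=
  fun j => ⟨C j, ⟨j, rfl⟩⟩

theorem chamberMap_monotone (C : ℝ × ℝ → Set (ℝ × ℝ)) (hmem : ∀ j, j ∈ C j) :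
    Monotone (chamberMap C) := by
  intro x y hxy
  show Relation.ReflTransGen (chamberRel C) (C x) (C y)
  refine Relation.ReflTransGen.single ⟨⟨x, rfl⟩, ⟨y, rfl⟩, ?_⟩
  by_cases h : C x = C y
  · exact Or.inl h
  · exact Or.inr ⟨h, x, hmem x, y, hmem y, hxy⟩

section EncodingProof

namespace Enc

abbrev Pt := ℝ × ℝ

variable {F : Type} [Field F] (M : PersistenceModule F Pt) (J : Set Pt)

/-- chain predicate: pairs (peak, next valley). -/
def Ok : Pt → List (Pt × Pt) → Pt → Prop
  | a, [], b => a = b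
  | a, c :: l, b => a ∈ J ∧ c.1 ∈ J ∧ c.2 ∈ J ∧ a ≤ c.1 ∧ c.2 ≤ c.1 ∧ Ok c.2 l b

variable (hiso : ∀ x y, x ∈ J → y ∈ J → ∀ h : x ≤ y, Function.Bijective (M.map h))

/-- the iso along a relation inside J -/
noncomputable def pe {x y : Pt} (hx : x ∈ J) (hy : y ∈ J) (h : x ≤ y) : M.V x ≃ₗ[F] M.V y :=
  LinearEquiv.ofBijective (M.map h) (hiso x y hx hy h)

lemma pe_apply {x y : Pt} (hx : x ∈ J) (hy : y ∈ J) (h : x ≤ y) (v : M.V x) :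
    pe M J hiso hx hy h v = M.map h v := rfl

lemma pe_self {x : Pt} (hx hx' : x ∈ J) (h : x ≤ x) :
    pe M J hiso hx hx' h = LinearEquiv.refl F (M.V x) := by
  apply LinearEquiv.toLinearMap_injective
  ext v
  show M.map h v = v
  have : h = le_refl x := rfl
  rw [this, M.map_id]; rfl

lemma pe_trans {x y z : Pt} (hx : x ∈ J) (hy : y ∈ J) (hz : z ∈ J)
    (h₁ : x ≤ y) (h₂ : y ≤ z) :
    (pe M J hiso hx hy h₁).trans (pe M J hiso hy hz h₂) = pe M J hiso hx hz (h₁.trans h₂) := by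
  apply LinearEquiv.toLinearMap_injective
  ext v
  show M.map h₂ (M.map h₁ v) = M.map (h₁.trans h₂) v
  rw [← M.map_comp h₁ h₂]; rfl

/-- peak replacement -/
lemma pe_peak {x y j p : Pt} (hx : x ∈ J) (hy : y ∈ J) (hj : j ∈ J) (hp : p ∈ J)
    (hxj : x ≤ j) (hyj : y ≤ j) (hjp : j ≤ p) :
    (pe M J hiso hx hp (hxj.trans hjp)).trans (pe M J hiso hy hp (hyj.trans hjp)).symm =
      (pe M J hiso hx hj hxj).trans (pe M J hiso hy hj hyj).symm := by
  rw [← pe_trans M J hiso hx hj hp hxj hjp, ← pe_trans M J hiso hy hj hp hyj hjp]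
  apply LinearEquiv.toLinearMap_injective
  ext v
  simp [LinearEquiv.trans_apply]

/-- transport along a chain -/
lemma ltrans_assoc {A B C D : Type} [AddCommGroup A] [AddCommGroup B] [AddCommGroup C]
    [AddCommGroup D] [Module F A] [Module F B] [Module F C] [Module F D]
    (e₁ : A ≃ₗ[F] B) (e₂ : B ≃ₗ[F] C) (e₃ : C ≃ₗ[F] D) :
    (e₁.trans e₂).trans e₃ = e₁.trans (e₂.trans e₃) := rfl

noncomputable def TC : (l : List (Pt × Pt)) → (a b : Pt) → Ok J a l b → (M.V a ≃ₗ[F] M.V b)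
  | [], a, _, h => h ▸ LinearEquiv.refl F (M.V a)
  | c :: l, a, b, h =>
    ((pe M J hiso h.1 h.2.1 h.2.2.2.1).trans
      (pe M J hiso h.2.2.1 h.2.1 h.2.2.2.2.1).symm).trans
      (TC l c.2 b h.2.2.2.2.2)

lemma TC_nil (a : Pt) (h : Ok J a [] a) : TC M J hiso [] a a h = LinearEquiv.refl F (M.V a) := rfl

lemma TC_cons (c : Pt × Pt) (l : List (Pt × Pt)) (a b : Pt) (h : Ok J a (c :: l) b) :
    TC M J hiso (c :: l) a b h =
      ((pe M J hiso h.1 h.2.1 h.2.2.2.1).trans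
        (pe M J hiso h.2.2.1 h.2.1 h.2.2.2.2.1).symm).trans
        (TC M J hiso l c.2 b h.2.2.2.2.2) := rfl

lemma ok_append {a y b : Pt} {l₁ l₂ : List (Pt × Pt)} (h₁ : Ok J a l₁ y) (h₂ : Ok J y l₂ b) :
    Ok J a (l₁ ++ l₂) b := by
  induction l₁ generalizing a with
  | nil => cases h₁; exact h₂
  | cons c l ih => exact ⟨h₁.1, h₁.2.1, h₁.2.2.1, h₁.2.2.2.1, h₁.2.2.2.2.1, ih h₁.2.2.2.2.2⟩

lemma ok_append_split {a b : Pt} (l₁ l₂ : List (Pt × Pt)) (h : Ok J a (l₁ ++ l₂) b) :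
    ∃ y, Ok J a l₁ y ∧ Ok J y l₂ b := by
  induction l₁ generalizing a with
  | nil => exact ⟨a, rfl, h⟩
  | cons c l ih =>
    obtain ⟨y, hy₁, hy₂⟩ := ih h.2.2.2.2.2
    exact ⟨y, ⟨h.1, h.2.1, h.2.2.1, h.2.2.2.1, h.2.2.2.2.1, hy₁⟩, hy₂⟩

lemma ok_mem_right {a b : Pt} {l : List (Pt × Pt)} (h : Ok J a l b) (ha : a ∈ J) : b ∈ J := by
  induction l generalizing a with
  | nil => cases h; exact ha
  | cons c l ih => exact ih h.2.2.2.2.2 h.2.2.1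

lemma TC_append {a y b : Pt} (l₁ l₂ : List (Pt × Pt)) (h₁ : Ok J a l₁ y) (h₂ : Ok J y l₂ b) :
    TC M J hiso (l₁ ++ l₂) a b (ok_append J h₁ h₂) =
      (TC M J hiso l₁ a y h₁).trans (TC M J hiso l₂ y b h₂) := by
  induction l₁ generalizing a with
  | nil => cases h₁; rw [show TC M J hiso ([] ++ l₂) y b (ok_append J rfl h₂) =
      TC M J hiso l₂ y b h₂ from rfl]; exact (LinearEquiv.refl_trans _).symm
  | cons c l ih =>
    show TC M J hiso (c :: (l ++ l₂)) a b _ = _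
    rw [TC_cons, TC_cons, ih h₁.2.2.2.2.2]; rfl


/-- reversed chain: given chain from a (with pairs l) its reverse from the far end back to a. -/
def rev : List (Pt × Pt) → Pt → List (Pt × Pt)
  | [], _ => []
  | c :: l, a => rev l c.2 ++ [(c.1, a)]

lemma ok_rev {a b : Pt} (l : List (Pt × Pt)) (h : Ok J a l b) : Ok J b (rev l a) a := by
  induction l generalizing a with
  | nil => cases h; exact rfl
  | cons c l ih =>
    exact ok_append J (ih h.2.2.2.2.2)
      ⟨h.2.2.1, h.2.1, h.1, h.2.2.2.2.1, h.2.2.2.1, rfl⟩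

lemma helper_eq_symm {A B : Type} [AddCommGroup A] [AddCommGroup B] [Module F A] [Module F B]
    (e₁ : A ≃ₗ[F] B) (e₂ : B ≃ₗ[F] A) (h : e₁.trans e₂ = LinearEquiv.refl F A) :
    e₂ = e₁.symm := by
  have := congrArg (fun z => e₁.symm.trans z) h
  simpa [← ltrans_assoc, LinearEquiv.symm_trans_self, LinearEquiv.refl_trans,
    LinearEquiv.trans_refl] using this

lemma helper_eq_symm' {A B : Type} [AddCommGroup A] [AddCommGroup B] [Module F A] [Module F B]
    (e₁ : A ≃ₗ[F] B) (e₂ : B ≃ₗ[F] A) (h : e₁.trans e₂ = LinearEquiv.refl F A) :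
    e₁ = e₂.symm := by
  rw [helper_eq_symm e₁ e₂ h]
  exact (LinearEquiv.symm_symm e₁).symm

lemma helper_flip {A B : Type} [AddCommGroup A] [AddCommGroup B] [Module F A] [Module F B]
    (e₁ : A ≃ₗ[F] B) (e₂ : B ≃ₗ[F] A) (h : e₁.trans e₂ = LinearEquiv.refl F A) :
    e₂.trans e₁ = LinearEquiv.refl F B := by
  rw [helper_eq_symm e₁ e₂ h, LinearEquiv.symm_trans_self]

lemma TC_rev {a b : Pt} (l : List (Pt × Pt)) (h : Ok J a l b) :
    TC M J hiso (rev l a) b a (ok_rev J l h) = (TC M J hiso l a b h).symm := by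
  induction l generalizing a with
  | nil => cases h; rfl
  | cons c l ih =>
    show TC M J hiso (rev l c.2 ++ [(c.1, a)]) b a _ = _
    rw [TC_append M J hiso (rev l c.2) [(c.1, a)] (ok_rev J l h.2.2.2.2.2)
      ⟨h.2.2.1, h.2.1, h.1, h.2.2.2.2.1, h.2.2.2.1, rfl⟩]
    rw [ih h.2.2.2.2.2]
    apply LinearEquiv.toLinearMap_injective
    ext v
    simp [TC_cons, TC_nil, LinearEquiv.trans_apply, LinearEquiv.symm_trans_apply, pe]
    rfl

/-- path independence for chains, given loop triviality -/
lemma TC_pi_of_loops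
    (hloops : ∀ (l : List (Pt × Pt)) (a : Pt) (h : Ok J a l a),
      TC M J hiso l a a h = LinearEquiv.refl F (M.V a))
    {a b : Pt} (l₁ l₂ : List (Pt × Pt)) (h₁ : Ok J a l₁ b) (h₂ : Ok J a l₂ b) :
    TC M J hiso l₁ a b h₁ = TC M J hiso l₂ a b h₂ := by
  have hok : Ok J a (l₁ ++ rev l₂ a) a := ok_append J h₁ (ok_rev J l₂ h₂)
  have := hloops _ a hok
  rw [TC_append M J hiso l₁ (rev l₂ a) h₁ (ok_rev J l₂ h₂), TC_rev] at this
  have h3 := helper_eq_symm _ _ this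
  have h4 := congrArg LinearEquiv.symm h3
  simp only [LinearEquiv.symm_symm] at h4
  exact h4.symm


lemma TC_single (c : Pt × Pt) (a : Pt) (h : Ok J a [c] c.2) :
    TC M J hiso [c] a c.2 h =
      (pe M J hiso h.1 h.2.1 h.2.2.2.1).trans (pe M J hiso h.2.2.1 h.2.1 h.2.2.2.2.1).symm := by
  rw [TC_cons, TC_nil, LinearEquiv.trans_refl]

lemma TC_single' (p v a : Pt) (h : Ok J a [(p, v)] v) :
    TC M J hiso [(p, v)] a v h =
      (pe M J hiso h.1 h.2.1 h.2.2.2.1).trans (pe M J hiso h.2.2.1 h.2.1 h.2.2.2.2.1).symm := by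
  rw [TC_cons, TC_nil, LinearEquiv.trans_refl]

lemma ok_rot {a : Pt} {c : Pt × Pt} {l : List (Pt × Pt)} (h : Ok J a (c :: l) a) :
    Ok J c.2 (l ++ [c]) c.2 :=
  ok_append J h.2.2.2.2.2 ⟨h.1, h.2.1, h.2.2.1, h.2.2.2.1, h.2.2.2.2.1, rfl⟩

lemma TC_rot {a : Pt} {c : Pt × Pt} {l : List (Pt × Pt)} (h : Ok J a (c :: l) a)
    (hrot : TC M J hiso (l ++ [c]) c.2 c.2 (ok_rot J h) = LinearEquiv.refl F (M.V c.2)) :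
    TC M J hiso (c :: l) a a h = LinearEquiv.refl F (M.V a) := by
  have hpair : Ok J a [c] c.2 := ⟨h.1, h.2.1, h.2.2.1, h.2.2.2.1, h.2.2.2.2.1, rfl⟩
  rw [TC_append M J hiso l [c] h.2.2.2.2.2 hpair] at hrot
  have hflip := helper_flip _ _ hrot
  rw [TC_cons]
  rw [TC_single] at hflip
  exact hflip

/-- the `t`-th valley (cyclically) of the loop `(a, l)` -/
noncomputable def vly (a : Pt) (l : List (Pt × Pt)) (t : ℕ) : Pt :=
  if t % l.length = 0 then a else (l.getD (t % l.length - 1) default).2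

lemma vly_period (a : Pt) (l : List (Pt × Pt)) (t : ℕ) :
    vly a l (t + l.length) = vly a l t := by
  simp [vly, Nat.add_mod_right]

def rotL : Pt × List (Pt × Pt) → Pt × List (Pt × Pt)
  | (a, []) => (a, [])
  | (_, c :: l) => (c.2, l ++ [c])

lemma ok_last {a b : Pt} (l : List (Pt × Pt)) (h : Ok J a l b) (hne : l ≠ []) :
    (l.getD (l.length - 1) default).2 = b := by
  induction l generalizing a with
  | nil => exact absurd rfl hne
  | cons c l ih =>
    rcases l with _ | ⟨d, l'⟩
    · cases h.2.2.2.2.2; rfl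
    · exact ih h.2.2.2.2.2 (by simp)

lemma vly_rot {a : Pt} {c : Pt × Pt} {l : List (Pt × Pt)} (hne : l ≠ [])
    (h : Ok J a (c :: l) a) (t : ℕ) :
    vly c.2 (l ++ [c]) t = vly a (c :: l) (t + 1) := by
  have hlne : l.length ≠ 0 := fun h0 => hne (List.eq_nil_of_length_eq_zero h0)
  have hk2 : 2 ≤ l.length + 1 := by omega
  have hlen1 : (l ++ [c]).length = l.length + 1 := by simp
  have hlen2 : (c :: l).length = l.length + 1 := by simp
  set k := l.length + 1 with hkdef
  set s := t % k with hs
  have hslt : s < k := Nat.mod_lt _ (by omega)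
  have he : (t + 1) % k = (s + 1) % k := by
    rw [Nat.add_mod t 1 k, Nat.mod_eq_of_lt (show 1 < k by omega)]
  have lhs_eq : vly c.2 (l ++ [c]) t =
      if s = 0 then c.2 else ((l ++ [c]).getD (s - 1) default).2 := by
    rw [vly, hlen1, ← hs]
  have rhs_eq : vly a (c :: l) (t + 1) =
      if (s + 1) % k = 0 then a else ((c :: l).getD ((s + 1) % k - 1) default).2 := by
    rw [vly, hlen2, he]
  rw [lhs_eq, rhs_eq]
  rcases eq_or_ne s (k - 1) with hsk | hsk
  · have h0 : (s + 1) % k = 0 := by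
      rw [hsk, show k - 1 + 1 = k by omega, Nat.mod_self]
    have hs0 : s ≠ 0 := by omega
    rw [if_neg hs0, if_pos h0, List.getD_append _ _ _ _ (by omega)]
    rw [show s - 1 = l.length - 1 by omega]
    exact ok_last J l h.2.2.2.2.2 hne
  · have h1 : (s + 1) % k = s + 1 := Nat.mod_eq_of_lt (by omega)
    rw [if_neg (by omega : ¬(s + 1) % k = 0), h1]
    rcases eq_or_ne s 0 with h0 | h0
    · rw [if_pos h0, h0]; rfl
    · rw [if_neg h0, List.getD_append _ _ _ _ (by omega)]
      have : s + 1 - 1 = (s - 1) + 1 := by omega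
      rw [this, List.getD_cons_succ]

lemma rotIter_facts {a : Pt} {l : List (Pt × Pt)} (h : Ok J a l a) (hne : l ≠ []) :
    ∀ r : ℕ,
      Ok J (rotL^[r] (a, l)).1 (rotL^[r] (a, l)).2 (rotL^[r] (a, l)).1 ∧
      (rotL^[r] (a, l)).2.length = l.length ∧
      (rotL^[r] (a, l)).2 ≠ [] ∧
      ∀ t, vly (rotL^[r] (a, l)).1 (rotL^[r] (a, l)).2 t = vly a l (t + r) := by
  intro r
  induction r generalizing a l with
  | zero => exact ⟨h, rfl, hne, fun t => rfl⟩
  | succ r ih =>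
    rcases l with _ | ⟨c, l'⟩
    · exact absurd rfl hne
    · have hrot : rotL (a, c :: l') = (c.2, l' ++ [c]) := rfl
      have hok' : Ok J c.2 (l' ++ [c]) c.2 := ok_rot J h
      have hne' : (l' ++ [c]) ≠ [] := by simp
      have step : rotL^[r + 1] (a, c :: l') = rotL^[r] (c.2, l' ++ [c]) := by
        rw [Function.iterate_succ_apply, hrot]
      obtain ⟨f1, f2, f3, f4⟩ := ih hok' hne'
      rw [step]
      refine ⟨f1, by simp [f2], f3, fun t => ?_⟩
      rcases eq_or_ne l' ([] : List (Pt × Pt)) with hl' | hl'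
      · subst hl'
        rw [f4 t]
        have hc2 : c.2 = a := h.2.2.2.2.2
        have e1 : vly c.2 ([] ++ [c]) (t + r) = c.2 := by
          rw [vly]; simp [Nat.mod_one]
        have e2 : vly a [c] (t + (r + 1)) = a := by
          rw [vly]; simp [Nat.mod_one]
        rw [e1, e2]; exact hc2
      · rw [f4 t, vly_rot J hl' h (t + r), show t + r + 1 = t + (r + 1) by omega]


lemma TC_rotIter : ∀ (r : ℕ) {a : Pt} {l : List (Pt × Pt)} (h : Ok J a l a),
    (∃ hok : Ok J (rotL^[r] (a, l)).1 (rotL^[r] (a, l)).2 (rotL^[r] (a, l)).1,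
      TC M J hiso (rotL^[r] (a, l)).2 (rotL^[r] (a, l)).1 (rotL^[r] (a, l)).1 hok =
        LinearEquiv.refl F (M.V (rotL^[r] (a, l)).1)) →
    TC M J hiso l a a h = LinearEquiv.refl F (M.V a) := by
  intro r
  induction r with
  | zero => intro a l h hex; obtain ⟨hok, ht⟩ := hex; exact ht
  | succ r ih =>
    intro a l h hex
    rcases l with _ | ⟨c, l'⟩
    · have step : rotL^[r + 1] ((a, ([] : List (Pt × Pt)))) = rotL^[r] ((a, ([] : List (Pt × Pt)))) := by
        rw [Function.iterate_succ_apply]; rfl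
      rw [step] at hex
      exact ih h hex
    · have step : rotL^[r + 1] (a, c :: l') = rotL^[r] (c.2, l' ++ [c]) := by
        rw [Function.iterate_succ_apply]; rfl
      rw [step] at hex
      exact TC_rot M J hiso h (ih (ok_rot J h) hex)

lemma argmax_lemma (k : ℕ) (hk : 3 ≤ k) (u : ℕ → Pt) (hper : ∀ t, u (t + k) = u t) :
    ∃ r m, 2 ≤ m ∧ m ≤ k - 1 ∧ u (r + m) ≤ u r ⊔ u (r + 1) := by
  have hmod : ∀ t, u t = u (t % k) := by
    intro t
    induction t using Nat.strong_induction_on with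
    | _ t ihh =>
      rcases lt_or_ge t k with hlt | hge
      · rw [Nat.mod_eq_of_lt hlt]
      · have h1 : t - k < t := by omega
        have h2 : u t = u (t - k) := by
          conv_lhs => rw [show t = (t - k) + k by omega]
          exact hper (t - k)
        rw [h2, ihh _ h1, Nat.mod_eq_sub_mod hge]
  obtain ⟨t₀, ht₀mem, ht₀⟩ := Finset.exists_max_image (Finset.range k)
    (fun t => (u t).1) ⟨0, Finset.mem_range.2 (by omega)⟩
  have hmax : ∀ t, (u t).1 ≤ (u t₀).1 := by
    intro t
    rw [hmod t]
    exact ht₀ _ (Finset.mem_range.2 (Nat.mod_lt _ (by omega)))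
  by_contra hcon
  push_neg at hcon
  have F1 := hcon t₀ (k - 1) (by omega) le_rfl
  have F2 := hcon (t₀ + k - 1) 2 le_rfl (by omega)
  have eq3 : t₀ + (k - 1) = t₀ + k - 1 := by omega
  rw [eq3] at F1
  have e1 : t₀ + k - 1 + 2 = (t₀ + 1) + k := by omega
  have e2 : t₀ + k - 1 + 1 = t₀ + k := by omega
  rw [e1, e2, hper (t₀ + 1), hper t₀] at F2
  have y1 : (u (t₀ + 1)).2 < (u (t₀ + k - 1)).2 := by
    by_contra hy
    push_neg at hy
    apply F1
    rw [Prod.le_def]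
    constructor
    · rw [Prod.fst_sup]; exact le_sup_of_le_left (hmax _)
    · rw [Prod.snd_sup]; exact le_sup_of_le_right hy
  have y2 : (u (t₀ + k - 1)).2 < (u (t₀ + 1)).2 := by
    by_contra hy
    push_neg at hy
    apply F2
    rw [Prod.le_def]
    constructor
    · rw [Prod.fst_sup]
      exact le_sup_of_le_right (hmax _)
    · rw [Prod.snd_sup]; exact le_sup_of_le_left hy
  exact absurd y2 (not_lt.2 y1.le)


lemma main0 (hconv : PosetConvex J) (k : ℕ) (hk : 3 ≤ k)
    (IH : ∀ k' < k, ∀ (l : List (Pt × Pt)) (a : Pt) (h : Ok J a l a), l.length = k' →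
      TC M J hiso l a a h = LinearEquiv.refl F (M.V a))
    (l : List (Pt × Pt)) (a : Pt) (h : Ok J a l a) (hlen : l.length = k)
    (m : ℕ) (hm2 : 2 ≤ m) (hmk : m ≤ k - 1)
    (hgood : vly a l m ≤ vly a l 0 ⊔ vly a l 1) :
    TC M J hiso l a a h = LinearEquiv.refl F (M.V a) := by
  rcases l with _ | ⟨c, rest⟩
  · simp at hlen; omega
  rcases c with ⟨p₁, u₁⟩
  have hrestlen : rest.length = k - 1 := by
    simp only [List.length_cons] at hlen; omega
  -- split rest
  obtain ⟨Mid, Rest, hMidlen, rfl⟩ :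
      ∃ L1 L2, L1.length = m - 1 ∧ rest = L1 ++ L2 :=
    ⟨rest.take (m - 1), rest.drop (m - 1),
      by rw [List.length_take]; omega, (List.take_append_drop _ _).symm⟩
  have hRestlen : Rest.length = k - m := by
    rw [List.length_append] at hrestlen; omega
  have ha : a ∈ J := h.1
  have hp₁ : p₁ ∈ J := h.2.1
  have hu₁ : u₁ ∈ J := h.2.2.1
  have hap₁ : a ≤ p₁ := h.2.2.2.1
  have hu₁p₁ : u₁ ≤ p₁ := h.2.2.2.2.1
  have hrest : Ok J u₁ (Mid ++ Rest) a := h.2.2.2.2.2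
  have hlength : ((p₁, u₁) :: (Mid ++ Rest)).length = k := hlen
  -- compute the vly values
  have hv0 : vly a ((p₁, u₁) :: (Mid ++ Rest)) 0 = a := by rw [vly]; simp
  have hv1 : vly a ((p₁, u₁) :: (Mid ++ Rest)) 1 = u₁ := by
    rw [vly]
    rw [Nat.mod_eq_of_lt (by rw [hlength]; omega)]
    rfl
  set us := ((Mid ++ Rest).getD (m - 2) default).2 with husdef
  have hvm : vly a ((p₁, u₁) :: (Mid ++ Rest)) m = us := by
    rw [vly]
    rw [Nat.mod_eq_of_lt (by rw [hlength]; omega)]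
    rw [if_neg (by omega)]
    rw [show m - 1 = (m - 2) + 1 by omega, List.getD_cons_succ]
  rw [hv0, hv1, hvm] at hgood
  set j := a ⊔ u₁ with hjdef
  have hjp₁ : j ≤ p₁ := sup_le hap₁ hu₁p₁
  have hj : j ∈ J := hconv u₁ hu₁ p₁ hp₁ j le_sup_right hjp₁
  have haj : a ≤ j := le_sup_left
  have hu₁j : u₁ ≤ j := le_sup_right
  obtain ⟨y, hOkMid, hOkRest⟩ := ok_append_split J Mid Rest hrest
  have hy : y = us := by
    have hMne : Mid ≠ [] := by
      intro h0; rw [h0] at hMidlen; simp at hMidlen; omega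
    have hlast := ok_last J Mid hOkMid hMne
    rw [husdef, List.getD_append _ _ _ _ (by omega), ← hlast, hMidlen,
      show m - 1 - 1 = m - 2 from by omega]
  subst hy
  have hus : us ∈ J := ok_mem_right J hOkMid hu₁
  have husj : us ≤ j := hgood
  -- the two smaller loops
  have pairOk1 : Ok J us [(j, u₁)] u₁ := ⟨hus, hj, hu₁, husj, hu₁j, rfl⟩
  have hOk1 : Ok J u₁ (Mid ++ [(j, u₁)]) u₁ := ok_append J hOkMid pairOk1
  have ht1 : TC M J hiso (Mid ++ [(j, u₁)]) u₁ u₁ hOk1 = LinearEquiv.refl F (M.V u₁) :=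
    IH m (by omega) _ _ hOk1 (by rw [List.length_append, hMidlen]; simp; omega)
  rw [TC_append M J hiso Mid [(j, u₁)] hOkMid pairOk1] at ht1
  have hTCMid := helper_eq_symm' _ _ ht1
  have pairOk2 : Ok J a [(j, us)] us := ⟨ha, hj, hus, haj, husj, rfl⟩
  have hOk2 : Ok J us (Rest ++ [(j, us)]) us := ok_append J hOkRest pairOk2
  have ht2 : TC M J hiso (Rest ++ [(j, us)]) us us hOk2 = LinearEquiv.refl F (M.V us) :=
    IH (k - m + 1) (by omega) _ _ hOk2 (by rw [List.length_append, hRestlen]; simp)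
  rw [TC_append M J hiso Rest [(j, us)] hOkRest pairOk2] at ht2
  have hTCRest := helper_eq_symm' _ _ ht2
  -- assemble
  rw [TC_cons]
  rw [TC_append M J hiso Mid Rest hOkMid hOkRest]
  rw [hTCMid, hTCRest]
  rw [TC_single' M J hiso j u₁ us pairOk1, TC_single' M J hiso j us a pairOk2]
  rw [pe_peak M J hiso ha hu₁ hj hp₁ haj hu₁j hjp₁]
  apply LinearEquiv.toLinearMap_injective
  ext v
  simp [LinearEquiv.trans_apply, LinearEquiv.symm_trans_apply]

theorem loops_trivial (hconv : PosetConvex J) (l : List (Pt × Pt)) (a : Pt) (h : Ok J a l a) :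
    TC M J hiso l a a h = LinearEquiv.refl F (M.V a) := by
  suffices H : ∀ k (l : List (Pt × Pt)) (a : Pt) (h : Ok J a l a), l.length = k →
      TC M J hiso l a a h = LinearEquiv.refl F (M.V a) from H l.length l a h rfl
  intro k
  induction k using Nat.strong_induction_on with
  | _ k IH =>
    intro l a h hlen
    by_cases hk3 : 3 ≤ k
    · -- main case
      have hne : l ≠ [] := by
        intro h0; rw [h0] at hlen; simp at hlen; omega
      have hper : ∀ t, vly a l (t + k) = vly a l t := by
        intro t; rw [← hlen]; exact vly_period a l t
      obtain ⟨r, m, hm2, hmk, hle⟩ := argmax_lemma k hk3 (vly a l) hper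
      obtain ⟨f1, f2, f3, f4⟩ := rotIter_facts J h hne r
      apply TC_rotIter M J hiso r h
      refine ⟨f1, ?_⟩
      apply main0 M J hiso hconv k hk3
        (fun k' hk' l' a' h' hl' => IH k' hk' l' a' h' hl')
        _ _ f1 (by rw [f2, hlen]) m hm2 hmk ?_
      rw [f4 m, f4 0, f4 1]
      rw [show m + r = r + m by omega, show 0 + r = r by omega,
        show 1 + r = r + 1 by omega]
      exact hle
    · -- small cases
      rcases l with _ | ⟨⟨p₁, v₁⟩, l⟩
      · cases h; rfl
      rcases l with _ | ⟨⟨p₂, v₂⟩, l⟩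
      · -- one pair
        have hv : v₁ = a := h.2.2.2.2.2
        subst hv
        rw [TC_single' M J hiso p₁ v₁ _ h]
        exact LinearEquiv.self_trans_symm _
      rcases l with _ | ⟨c₃, l⟩
      · -- two pairs
        have hv : v₂ = a := h.2.2.2.2.2.2.2.2.2.2
        subst hv
        have ha : v₂ ∈ J := h.1
        have hp₁ : p₁ ∈ J := h.2.1
        have hv₁ : v₁ ∈ J := h.2.2.1
        have hap₁ : v₂ ≤ p₁ := h.2.2.2.1
        have hv₁p₁ : v₁ ≤ p₁ := h.2.2.2.2.1
        have h2 : Ok J v₁ [(p₂, v₂)] v₂ := h.2.2.2.2.2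
        have hp₂ : p₂ ∈ J := h2.2.1
        have hv₁p₂ : v₁ ≤ p₂ := h2.2.2.2.1
        have hap₂ : v₂ ≤ p₂ := h2.2.2.2.2.1
        set j := v₂ ⊔ v₁ with hjdef
        have hjp₁ : j ≤ p₁ := sup_le hap₁ hv₁p₁
        have hjp₂ : j ≤ p₂ := sup_le hap₂ hv₁p₂
        have hj : j ∈ J := hconv v₁ hv₁ p₁ hp₁ j le_sup_right hjp₁
        have haj : v₂ ≤ j := le_sup_left
        have hv₁j : v₁ ≤ j := le_sup_right
        show TC M J hiso ([(p₁, v₁)] ++ [(p₂, v₂)]) v₂ v₂ h = _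
        rw [TC_append M J hiso [(p₁, v₁)] [(p₂, v₂)]
          ⟨ha, hp₁, hv₁, hap₁, hv₁p₁, rfl⟩ h2]
        rw [TC_single' M J hiso p₁ v₁ v₂ ⟨ha, hp₁, hv₁, hap₁, hv₁p₁, rfl⟩,
          TC_single' M J hiso p₂ v₂ v₁ h2]
        rw [pe_peak M J hiso ha hv₁ hj hp₁ haj hv₁j hjp₁,
          pe_peak M J hiso hv₁ ha hj hp₂ hv₁j haj hjp₂]
        apply LinearEquiv.toLinearMap_injective
        ext v
        simp [LinearEquiv.trans_apply]
      · -- length ≥ 3, contradiction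
        exfalso
        simp only [List.length_cons] at hlen
        omega


theorem TC_pi (hconv : PosetConvex J) {a b : Pt}
    (l₁ l₂ : List (Pt × Pt)) (h₁ : Ok J a l₁ b) (h₂ : Ok J a l₂ b) :
    TC M J hiso l₁ a b h₁ = TC M J hiso l₂ a b h₂ :=
  TC_pi_of_loops M J hiso (fun l a h => loops_trivial M J hiso hconv l a h) l₁ l₂ h₁ h₂

lemma zig_chain : ∀ {x y : ↥J}, Zigzag ↥J x y → ∃ l, Ok J ↑x l ↑y
  | _, _, .single a => ⟨[], rfl⟩
  | x, _, .consLe (b := b) h p => by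
    obtain ⟨l, hl⟩ := zig_chain p
    exact ⟨(↑b, ↑b) :: l, ⟨x.2, b.2, b.2, h, le_refl _, hl⟩⟩
  | x, _, .consGe (b := b) h p => by
    obtain ⟨l, hl⟩ := zig_chain p
    exact ⟨(↑x, ↑b) :: l, ⟨x.2, x.2, b.2, le_refl _, h, hl⟩⟩

include hiso in
theorem leg_bijective (hconv : PosetConvex J) (hconn : ZigzagConnected J)
    (L : Type) [AddCommGroup L] [Module F L]
    (σ : ∀ i : ↥J, L →ₗ[F] M.V ↑i)
    (hlim : IsLimitCone (M.restrict J) L σ)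
    (i₀ : ↥J) : Function.Bijective (σ i₀) := by
  have hcone : ∀ (i j : ↥J) (hij : i ≤ j),
      (M.map (show (i : Pt) ≤ (j : Pt) from hij)).comp (σ i) = σ j := hlim.1
  constructor
  · -- injectivity
    rw [← LinearMap.ker_eq_bot (M := L)]
    have hprop : ∀ (v : L) (l : List (Pt × Pt)) (x y : ↥J), Ok J ↑x l ↑y →
        σ x v = 0 → σ y v = 0 := by
      intro v l
      induction l with
      | nil =>
        intro x y hxy h0
        have hx : x = y := Subtype.ext hxy
        rwa [← hx]
      | cons c l ih =>
        intro x y hOk h0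
        have hpkm : c.1 ∈ J := hOk.2.1
        have hvlm : c.2 ∈ J := hOk.2.2.1
        have h1 : σ ⟨c.1, hpkm⟩ v = 0 := by
          have hc := hcone x ⟨c.1, hpkm⟩ hOk.2.2.2.1
          rw [← hc]
          simp [h0]
        have h2 : σ ⟨c.2, hvlm⟩ v = 0 := by
          have hc := hcone ⟨c.2, hvlm⟩ ⟨c.1, hpkm⟩ hOk.2.2.2.2.1
          have hinj := (hiso c.2 c.1 hvlm hpkm hOk.2.2.2.2.1).injective
          apply hinj
          have : M.map hOk.2.2.2.2.1 (σ ⟨c.2, hvlm⟩ v) = σ ⟨c.1, hpkm⟩ v := by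
            rw [← hc]; rfl
          rw [this, h1, map_zero]
        exact ih ⟨c.2, hvlm⟩ y hOk.2.2.2.2.2 h2
    have hall : ∀ v : L, σ i₀ v = 0 → ∀ i : ↥J, σ i v = 0 := by
      intro v h0 i
      obtain ⟨l, hl⟩ := zig_chain J (Classical.choice (hconn i₀ i))
      exact hprop v l i₀ i hl h0
    -- uniqueness argument: the common kernel is zero
    set K : Submodule F L := ⨅ i : ↥J, LinearMap.ker (σ i) with hK
    obtain ⟨φ, hφ, huniq⟩ := hlim.2 ↥K (fun _ => 0) (by intro i j hij; simp)
    have e1 : K.subtype = φ := by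
      apply huniq
      intro i
      ext ⟨w, hw⟩
      simp only [LinearMap.comp_apply, Submodule.subtype_apply, LinearMap.zero_apply]
      exact (Submodule.mem_iInf _).mp hw i
    have e2 : (0 : ↥K →ₗ[F] L) = φ := by
      apply huniq
      intro i
      exact LinearMap.comp_zero _
    have hKbot : K.subtype = (0 : ↥K →ₗ[F] L) := by rw [e1, ← e2]
    ext v
    simp only [LinearMap.mem_ker, Submodule.mem_bot]
    constructor
    · intro h0
      have hvK : v ∈ K := (Submodule.mem_iInf _).mpr (fun i => hall v h0 i)
      have := congrFun (congrArg (fun f => f.toFun) hKbot) ⟨v, hvK⟩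
      simpa using this
    · intro h0; rw [h0, map_zero]
  · -- surjectivity
    have hch : ∀ i : ↥J, ∃ l, Ok J ↑i₀ l ↑i :=
      fun i => zig_chain J (Classical.choice (hconn i₀ i))
    choose ch hch using hch
    have hτcone : ∀ (i i' : ↥J) (hii' : i ≤ i'),
        ((M.restrict J).map hii').comp
          (TC M J hiso (ch i) ↑i₀ ↑i (hch i)).toLinearMap =
          (TC M J hiso (ch i') ↑i₀ ↑i' (hch i')).toLinearMap := by
      intro i i' hii'
      have hOksnoc : Ok J ↑i₀ (ch i ++ [((↑i' : Pt), (↑i' : Pt))]) ↑i' :=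
        ok_append J (hch i) ⟨i.2, i'.2, i'.2, hii', le_refl _, rfl⟩
      have hpi := TC_pi M J hiso hconv _ _ hOksnoc (hch i')
      rw [TC_append M J hiso (ch i) [((↑i' : Pt), (↑i' : Pt))] (hch i)
        ⟨i.2, i'.2, i'.2, hii', le_refl _, rfl⟩] at hpi
      rw [TC_single' M J hiso ↑i' ↑i' ↑i ⟨i.2, i'.2, i'.2, hii', le_refl _, rfl⟩] at hpi
      rw [pe_self M J hiso i'.2 i'.2 (le_refl _)] at hpi
      rw [← hpi]
      apply LinearMap.ext
      intro v
      simp [LinearEquiv.trans_apply, pe_apply]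
      rfl
    obtain ⟨φ, hφ, _⟩ := hlim.2 (M.V ↑i₀)
      (fun i => (TC M J hiso (ch i) ↑i₀ ↑i (hch i)).toLinearMap) hτcone
    have h0 : (σ i₀).comp φ = (TC M J hiso (ch i₀) ↑i₀ ↑i₀ (hch i₀)).toLinearMap := hφ i₀
    have hid : TC M J hiso (ch i₀) ↑i₀ ↑i₀ (hch i₀) = LinearEquiv.refl F (M.V ↑i₀) := by
      rw [TC_pi M J hiso hconv (ch i₀) [] (hch i₀) rfl]
      rfl
    rw [hid] at h0
    intro w
    refine ⟨φ w, ?_⟩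
    have := congrFun (congrArg (fun f => f.toFun) h0) w
    simpa using this

end Enc

end EncodingProof

/-- Let `M` be a p.f.d. persistence module on `(ℝ,≤)²` admitting a
finite convex isotopy subdivision (encoded by the chamber map `C`), with poset of
chambers `ChamberPoset C` and chamber map `F_M = chamberMap C`. If
`Ñ : (P,≤) → vect_F` assigns to each chamber a limit of `M` over that chamber (with
limit-cone legs `σ`) and to each relation `p ≤ q` the canonical map between the
limits, then `M ≅ Ñ ∘ F_M`; in particular (the poset of chambers being finite) this
is a finite encoding of `M`. -/
theorem statement12 (F : Type) [Field F] (M : PersistenceModule F (ℝ × ℝ))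
    (hfd : ∀ j, FiniteDimensional F (M.V j))
    (C : ℝ × ℝ → Set (ℝ × ℝ))
    (hmem : ∀ j, j ∈ C j)
    (hpart : ∀ j k, k ∈ C j → C k = C j)
    (hfin : (Set.range C).Finite)
    (hconn : ∀ j, ZigzagConnected (C j))
    (hconv : ∀ j, PosetConvex (C j))
    (hiso : ∀ (j x y : ℝ × ℝ), x ∈ C j → y ∈ C j → ∀ h : x ≤ y,
      Function.Bijective (M.map h))
    (Nt : PersistenceModule F (ChamberPoset C))
    (σ : ∀ (p : ChamberPoset C) (i : ↥p.1), Nt.V p →ₗ[F] M.V ↑i)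
    (hlim : ∀ p : ChamberPoset C, IsLimitCone (M.restrict p.1) (Nt.V p) (σ p))
    (hmap : ∀ (p q : ChamberPoset C) (h : p ≤ q) (a : ↥p.1) (b : ↥q.1)
      (hab : (a : ℝ × ℝ) ≤ (b : ℝ × ℝ)),
      (σ q b).comp (Nt.map h) = (M.map hab).comp (σ p a)) :
    (∃ f : ∀ j : ℝ × ℝ, M.V j ≃ₗ[F] Nt.V (chamberMap C j),
      ∀ (j₁ j₂ : ℝ × ℝ) (h : j₁ ≤ j₂),
        (Nt.map (chamberMap_monotone C hmem h)).comp (f j₁).toLinearMap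
          = (f j₂).toLinearMap.comp (M.map h)) ∧
    Finite (ChamberPoset C) := by
  have bij : ∀ j : ℝ × ℝ, Function.Bijective (σ (chamberMap C j) ⟨j, hmem j⟩) :=
    fun j => Enc.leg_bijective M (C j) (fun x y hx hy h => hiso j x y hx hy h)
      (hconv j) (hconn j) (Nt.V (chamberMap C j)) (σ (chamberMap C j))
      (hlim (chamberMap C j)) ⟨j, hmem j⟩
  constructor
  · refine ⟨fun j => (LinearEquiv.ofBijective (σ (chamberMap C j) ⟨j, hmem j⟩) (bij j)).symm,
      ?_⟩
    intro j₁ j₂ h12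
    have hm := hmap (chamberMap C j₁) (chamberMap C j₂) (chamberMap_monotone C hmem h12)
      ⟨j₁, hmem j₁⟩ ⟨j₂, hmem j₂⟩ h12
    apply (LinearMap.cancel_right (bij j₁).surjective).mp
    ext v
    have hmv := LinearMap.congr_fun hm v
    simp only [LinearMap.comp_apply] at hmv
    simp only [LinearMap.comp_apply, LinearEquiv.coe_coe]
    rw [LinearEquiv.ofBijective_symm_apply_apply, ← hmv,
      LinearEquiv.ofBijective_symm_apply_apply]
  · exact hfin.to_subtype
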